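/- Let n ≥ 2, let λ_1,…,λ_n ∈ ℂ be pairwise distinct, and let δ ∈ ℂⁿ satisfy the genericity condition: for every nonempty proper subset S ⊊ {1,…,n} and every subset J ⊆ {1,…,n} with |J| = |S|, one has ∑_{i∈S} δ_i ≠ ∑_{j∈J} λ_j. Then no n×n complex matrix x whose characteristic polynomial is ∏_{i=1}^n (X − λ_i) and whose diagonal entries are x_{ii} = δ_i preserves a nonzero coordinate subspace ℂ^S with S ⊆ {1,…,n−1}; i.e., for every nonempty S ⊆ {1,…,n−1} there is v ∈ ℂ^S with x·v ∉ ℂ^S. -/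

import Mathlib

/-- The coordinate subspace `ℂ^S ⊆ ℂⁿ`: the span of the standard basis vectors `e_i`, `i ∈ S`. -/
noncomputable def coordSubspace (n : ℕ) (S : Finset (Fin n)) : Submodule ℂ (Fin n → ℂ) :=
  Submodule.span ℂ ((fun i => Pi.single i (1 : ℂ)) '' ↑S)

lemma mem_coordSubspace {n : ℕ} {S : Finset (Fin n)} {v : Fin n → ℂ} :
    v ∈ coordSubspace n S ↔ ∀ j ∉ S, v j = 0 := by
  constructor
  · intro hv j hj
    induction hv using Submodule.span_induction with
    | mem w hw =>
      obtain ⟨i, hi, rfl⟩ := hw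
      exact Pi.single_eq_of_ne (by rintro rfl; exact hj hi) 1
    | zero => rfl
    | add u w _ _ hu hw => simp [hu, hw]
    | smul c u _ hu => simp [hu]
  · intro h
    have hv : v = ∑ i ∈ S, v i • (Pi.single i (1 : ℂ) : Fin n → ℂ) := by
      funext j
      simp only [Finset.sum_apply, Pi.smul_apply, smul_eq_mul]
      by_cases hj : j ∈ S
      · rw [Finset.sum_eq_single j]
        · simp
        · intro b _ hbj; simp [Pi.single_eq_of_ne (Ne.symm hbj)]
        · intro hjs; exact absurd hj hjs
      · rw [h j hj, Finset.sum_eq_zero]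
        intro b hb
        have : b ≠ j := by rintro rfl; exact hj hb
        simp [Pi.single_eq_of_ne (Ne.symm this)]
    rw [hv]
    exact Submodule.sum_mem _ fun i hi =>
      Submodule.smul_mem _ _ (Submodule.subset_span ⟨i, hi, rfl⟩)

/-- Let `λ_1,…,λ_n` be pairwise distinct and let `δ ∈ ℂⁿ` be generic:
for every nonempty proper `S ⊊ {1,…,n}` and every `J` with `|J| = |S|`,
`∑_{i∈S} δ_i ≠ ∑_{j∈J} λ_j`.  Then no matrix `x` with characteristic polynomial
`∏ (X − λ_i)` and diagonal `δ` preserves a nonzero coordinate subspace `ℂ^S` with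
`S ⊆ {1,…,n−1}` (the first `n−1` coordinates). -/
theorem stmt9 (n : ℕ) (hn : 2 ≤ n) (lam : Fin n → ℂ) (hlam : Function.Injective lam)
    (δ : Fin n → ℂ)
    (hgen : ∀ S : Finset (Fin n), S.Nonempty → S ≠ Finset.univ →
      ∀ J : Finset (Fin n), J.card = S.card → ∑ i ∈ S, δ i ≠ ∑ j ∈ J, lam j)
    (x : Matrix (Fin n) (Fin n) ℂ)
    (hchar : x.charpoly = ∏ i : Fin n, (Polynomial.X - Polynomial.C (lam i)))
    (hdiag : ∀ i, x i i = δ i) :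
    ∀ S : Finset (Fin n), S.Nonempty → (∀ i ∈ S, (i : ℕ) < n - 1) →
      ∃ v ∈ coordSubspace n S, x.mulVec v ∉ coordSubspace n S := by
  intro S hSne hSlt
  by_contra hcon
  push_neg at hcon
  have hnpos : 0 < n := by omega
  have hSne_univ : S ≠ Finset.univ := by
    intro h
    have : (⟨n - 1, by omega⟩ : Fin n) ∈ S := h ▸ Finset.mem_univ _
    exact absurd (hSlt _ this) (by simp)
  -- columns indexed by S have support in S
  have hcol : ∀ i ∈ S, ∀ j ∉ S, x j i = 0 := by
    intro i hi j hj
    have hv : (Pi.single i (1 : ℂ) : Fin n → ℂ) ∈ coordSubspace n S :=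
      Submodule.subset_span ⟨i, hi, rfl⟩
    have := mem_coordSubspace.mp (hcon _ hv) j hj
    simpa [Matrix.mulVec_single] using this
  classical
  -- block decomposition
  set e : {i // i ∈ S} ⊕ {i // i ∉ S} ≃ Fin n := Equiv.sumCompl (· ∈ S) with he
  set M : Matrix ({i // i ∈ S} ⊕ {i // i ∉ S}) ({i // i ∈ S} ⊕ {i // i ∉ S}) ℂ :=
    Matrix.reindex e.symm e.symm x with hM
  have hMchar : M.charpoly = x.charpoly := Matrix.charpoly_reindex e.symm x
  have h21 : M.toBlocks₂₁ = 0 := by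
    ext j i
    simp only [Matrix.toBlocks₂₁, Matrix.of_apply, hM, Matrix.reindex_apply,
      Matrix.submatrix_apply, Matrix.zero_apply, Equiv.symm_symm, he,
      Equiv.sumCompl_apply_inl, Equiv.sumCompl_apply_inr]
    exact hcol i.1 i.2 j.1 j.2
  have hblock : M = Matrix.fromBlocks M.toBlocks₁₁ M.toBlocks₁₂ 0 M.toBlocks₂₂ := by
    conv_lhs => rw [← Matrix.fromBlocks_toBlocks M]
    rw [h21]
  set A := M.toBlocks₁₁ with hA
  have hchar2 : A.charpoly * M.toBlocks₂₂.charpoly = ∏ i : Fin n,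
      (Polynomial.X - Polynomial.C (lam i)) := by
    rw [← Matrix.charpoly_fromBlocks_zero₂₁, ← hblock, hMchar, hchar]
  -- trace of A
  have htrA : A.trace = ∑ i ∈ S, δ i := by
    rw [Matrix.trace]
    rw [← Finset.sum_attach S (fun i => δ i)]
    apply Finset.sum_congr rfl
    intro i _
    simp only [Matrix.diag_apply, hA, Matrix.toBlocks₁₁, hM, Matrix.reindex_apply,
      Matrix.submatrix_apply, Matrix.of_apply, Equiv.symm_symm, he,
      Equiv.sumCompl_apply_inl]
    exact hdiag i.1
  -- roots of charpoly A
  have hsplits : A.charpoly.Splits := IsAlgClosed.splits _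
  have htr2 : A.trace = A.charpoly.roots.sum := Matrix.trace_eq_sum_roots_charpoly A
  set R := A.charpoly.roots with hR
  -- the big polynomial's roots
  have hprod : (∏ i : Fin n, (Polynomial.X - Polynomial.C (lam i)))
      = ∏ a ∈ Finset.univ.image lam, (Polynomial.X - Polynomial.C a) := by
    rw [Finset.prod_image (fun a _ b _ h => hlam h)]
  have hbigroots : (∏ i : Fin n, (Polynomial.X - Polynomial.C (lam i))).roots
      = (Finset.univ.image lam).val := by
    rw [hprod, Polynomial.roots_prod_X_sub_C]
  have hdvd : A.charpoly ∣ ∏ i : Fin n, (Polynomial.X - Polynomial.C (lam i)) :=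
    ⟨M.toBlocks₂₂.charpoly, hchar2.symm⟩
  have hbigne : (∏ i : Fin n, (Polynomial.X - Polynomial.C (lam i))) ≠ 0 := by
    apply Finset.prod_ne_zero_iff.mpr
    intro i _
    exact Polynomial.X_sub_C_ne_zero _
  have hle : R ≤ (Finset.univ.image lam).val := by
    rw [hR, ← hbigroots]
    exact Polynomial.roots.le_of_dvd hbigne hdvd
  have hnodup : R.Nodup := Multiset.nodup_of_le hle (Finset.univ.image lam).nodup
  have hRsub : R.toFinset ⊆ Finset.univ.image lam := by
    intro a ha
    rw [Multiset.mem_toFinset] at ha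
    exact Multiset.mem_of_le hle ha
  -- cardinality of R
  have hScard : Fintype.card {i // i ∈ S} = S.card := Fintype.card_coe S
  have hRcard : Multiset.card R = S.card := by
    rw [hR, Polynomial.splits_iff_card_roots.mp hsplits,
      Matrix.charpoly_natDegree_eq_dim, hScard]
  -- define J
  set J : Finset (Fin n) := R.toFinset.preimage lam (Set.injOn_of_injective hlam) with hJ
  have hJimage : J.image lam = R.toFinset := by
    ext a
    constructor
    · intro ha
      rcases Finset.mem_image.mp ha with ⟨j, hj, rfl⟩
      simpa [hJ, Finset.mem_preimage] using hj
    · intro ha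
      rcases Finset.mem_image.mp (hRsub ha) with ⟨i, _, rfl⟩
      exact Finset.mem_image.mpr ⟨i, by simpa [hJ, Finset.mem_preimage] using ha, rfl⟩
  have hJcard : J.card = S.card := by
    have h1 : J.card = R.toFinset.card := by
      rw [← hJimage, Finset.card_image_of_injective _ hlam]
    rw [h1, Multiset.toFinset_card_of_nodup hnodup, hRcard]
  have hJsum : ∑ j ∈ J, lam j = R.sum :=
    calc ∑ j ∈ J, lam j = ∑ a ∈ J.image lam, a :=
          (Finset.sum_image (f := id) (g := lam) (fun a _ b _ h => hlam h)).symm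
      _ = ∑ a ∈ R.toFinset, a := by rw [hJimage]
      _ = R.sum := by
          simp [Finset.sum, Multiset.toFinset_val, Multiset.dedup_eq_self.mpr hnodup]
  exact hgen S hSne hSne_univ J hJcard (by rw [← htrA, htr2, hJsum])
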